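/- For any table r and any lists of attributes X and Y: r satisfies the order dependency X ↦→ X ++ Y if and only if for every attribute A occurring in Y, A is a constant in the context set(X) over r (i.e., r satisfies the set-based canonical OD set(X): [] ↦→ A), where set(X) denotes the set of entries of the list X. -/

import Mathlib

/-- `ordLE X t s` : the lexicographic weak order `t ≼_X s` induced by a list
of attributes `X` (each attribute is a function `τ → ℤ`). -/
def ordLE {τ : Type*} : List (τ → ℤ) → τ → τ → Prop
  | [], _, _ => True
  | A :: T, t, s => A t < A s ∨ (A t = A s ∧ ordLE T t s)

/-- The table `r` satisfies the order dependency (OD) `X ↦→ Y`. -/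
def satOD {τ : Type*} (r : List τ) (X Y : List (τ → ℤ)) : Prop :=
  ∀ t ∈ r, ∀ s ∈ r, ordLE X t s → ordLE Y t s

/-- `X` and `Y` are order equivalent over `r` (`X ↔ Y`). -/
def orderEquiv {τ : Type*} (r : List τ) (X Y : List (τ → ℤ)) : Prop :=
  satOD r X Y ∧ satOD r Y X

/-- `X` and `Y` are order compatible over `r` (the OCD `X ~ Y`). -/
def satOCD {τ : Type*} (r : List τ) (X Y : List (τ → ℤ)) : Prop :=
  orderEquiv r (X ++ Y) (Y ++ X)

/-- The table `r` satisfies the functional dependency (FD) `X → Y`. -/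
def satFD {τ : Type*} (r : List τ) (X Y : Finset (τ → ℤ)) : Prop :=
  ∀ t ∈ r, ∀ s ∈ r, (∀ A ∈ X, A t = A s) → ∀ B ∈ Y, B t = B s

/-- Attribute `A` is a constant in the context `Z` over `r`
(the set-based canonical OD `Z : [] ↦→ A`). -/
def constIn {τ : Type*} [DecidableEq (τ → ℤ)] (r : List τ) (Z : Finset (τ → ℤ))
    (A : τ → ℤ) : Prop :=
  ∀ Zp : List (τ → ℤ), Zp.Nodup → Zp.toFinset = Z → satOD r Zp (Zp ++ [A])

/-- Attributes `A` and `B` are order compatible in the context `Z` over `r`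
(the set-based canonical OCD `Z : A ~ B`). -/
def ocIn {τ : Type*} [DecidableEq (τ → ℤ)] (r : List τ) (Z : Finset (τ → ℤ))
    (A B : τ → ℤ) : Prop :=
  ∀ Zp : List (τ → ℤ), Zp.Nodup → Zp.toFinset = Z → satOCD r (Zp ++ [A]) (Zp ++ [B])


lemma ordLE_of_eq {τ : Type*} {X : List (τ → ℤ)} {t s : τ}
    (h : ∀ A ∈ X, A t = A s) : ordLE X t s := by
  induction X with
  | nil => trivial
  | cons B T ih =>
    exact Or.inr ⟨h B List.mem_cons_self, ih fun A hA => h A (List.mem_cons_of_mem _ hA)⟩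

lemma ordLE_append {τ : Type*} {X Y : List (τ → ℤ)} {t s : τ} :
    ordLE (X ++ Y) t s ↔ ordLE X t s ∧ ((∀ A ∈ X, A t = A s) → ordLE Y t s) := by
  induction X with
  | nil =>
    simp [ordLE]
  | cons B T ih =>
    rw [List.cons_append]
    show (_ ∨ _) ↔ _
    rw [ih]
    simp only [List.mem_cons, forall_eq_or_imp]
    constructor
    · rintro (h | ⟨he, h1, h2⟩)
      · exact ⟨Or.inl h, fun ⟨he, _⟩ => absurd he h.ne⟩
      · exact ⟨Or.inr ⟨he, h1⟩, fun ⟨_, hrest⟩ => h2 hrest⟩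
    · rintro ⟨h | ⟨he, h1⟩, h2⟩
      · exact Or.inl h
      · exact Or.inr ⟨he, h1, fun hrest => h2 ⟨he, hrest⟩⟩

lemma ordLE_antisymm {τ : Type*} {X : List (τ → ℤ)} {t s : τ}
    (h1 : ordLE X t s) (h2 : ordLE X s t) : ∀ A ∈ X, A t = A s := by
  induction X with
  | nil => simp
  | cons B T ih =>
    rcases h1 with h1 | ⟨he1, h1⟩
    · rcases h2 with h2 | ⟨he2, h2⟩
      · exact absurd (h1.trans h2) (lt_irrefl _)
      · exact absurd he2 h1.ne'
    · rcases h2 with h2 | ⟨he2, h2⟩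
      · exact absurd he1 h2.ne'
      · intro A hA
        rcases List.mem_cons.1 hA with rfl | hA
        · exact he1
        · exact ih h1 h2 A hA

theorem stmt_3 {τ : Type*} [DecidableEq (τ → ℤ)] (r : List τ) (X Y : List (τ → ℤ)) :
    satOD r X (X ++ Y) ↔ ∀ A ∈ Y, constIn r X.toFinset A := by
  constructor
  · intro h A hA Zp hnd hZp t ht s hs hts
    rw [ordLE_append]
    refine ⟨hts, fun heq => ?_⟩
    have heqX : ∀ B ∈ X, B t = B s := by
      intro B hB
      apply heq
      have : B ∈ Zp.toFinset := by rw [hZp]; exact List.mem_toFinset.2 hB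
      exact List.mem_toFinset.1 this
    have h1 := (ordLE_append.1 (h t ht s hs (ordLE_of_eq heqX))).2 heqX
    have heqXs : ∀ B ∈ X, B s = B t := fun B hB => (heqX B hB).symm
    have h2 := (ordLE_append.1 (h s hs t ht (ordLE_of_eq heqXs))).2 heqXs
    have := ordLE_antisymm h1 h2 A hA
    exact Or.inr ⟨this, trivial⟩
  · intro h t ht s hs hts
    rw [ordLE_append]
    refine ⟨hts, fun heq => ?_⟩
    apply ordLE_of_eq
    intro A hA
    have hc := h A hA X.dedup X.nodup_dedup (by ext a; simp)
    have heqd : ∀ B ∈ X.dedup, B t = B s := fun B hB => heq B (List.mem_dedup.1 hB)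
    have h1 := (ordLE_append.1 (hc t ht s hs (ordLE_of_eq heqd))).2 heqd
    have h2 := (ordLE_append.1 (hc s hs t ht (ordLE_of_eq (fun B hB => (heqd B hB).symm)))).2
      (fun B hB => (heqd B hB).symm)
    exact ordLE_antisymm h1 h2 A (List.mem_singleton_self _)
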